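/- arXiv:1810.06243 — 2 statements merged into one kernel-verified Lean document; each statement's English description precedes it below -/
import Mathlib

section
/- Let M_ε and M_μ be symmetric positive definite real matrices of sizes n×n and m×m respectively, and C an m×n real matrix. If e : ℝ → ℝⁿ and h : ℝ → ℝᵐ are differentiable and satisfy M_ε e'(t) = Cᵀ h(t) and M_μ h'(t) = −C e(t) for all t, then the discrete energy E(t) := ⟨M_ε e(t), e(t)⟩ + ⟨M_μ h(t), h(t)⟩ is constant in time. -/
open Matrix

lemma quad_deriv {k : ℕ} (A : Matrix (Fin k) (Fin k) ℝ) (u : ℝ → Fin k → ℝ)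
    (u' : Fin k → ℝ) (τ : ℝ) (hu : HasDerivAt u u' τ) :
    HasDerivAt (fun τ => A.mulVec (u τ) ⬝ᵥ u τ)
      (A.mulVec u' ⬝ᵥ u τ + A.mulVec (u τ) ⬝ᵥ u') τ := by
  have hcomp : ∀ i, HasDerivAt (fun τ => u τ i) (u' i) τ := fun i =>
    (hasDerivAt_pi.mp hu) i
  have h1 : ∀ i, HasDerivAt (fun τ => (∑ j, A i j * u τ j) * u τ i)
      ((∑ j, A i j * u' j) * u τ i + (∑ j, A i j * u τ j) * u' i) τ := by
    intro i
    exact (HasDerivAt.fun_sum (fun j _ => (hcomp j).const_mul (A i j))).mul (hcomp i)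
  have := HasDerivAt.fun_sum (u := Finset.univ) (fun i _ => h1 i)
  simpa [Matrix.mulVec, dotProduct, Finset.sum_add_distrib] using this

lemma dot_swap {k l : ℕ} (A : Matrix (Fin k) (Fin l) ℝ) (x : Fin l → ℝ) (y : Fin k → ℝ) :
    A.mulVec x ⬝ᵥ y = x ⬝ᵥ Aᵀ.mulVec y := by
  rw [dotProduct_comm, Matrix.dotProduct_mulVec, ← Matrix.mulVec_transpose,
    dotProduct_comm]

theorem stmt3 (n m : ℕ)
    (Mε : Matrix (Fin n) (Fin n) ℝ) (Mμ : Matrix (Fin m) (Fin m) ℝ)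
    (hMε : Mε.PosDef) (hMμ : Mμ.PosDef)
    (C : Matrix (Fin m) (Fin n) ℝ)
    (e : ℝ → Fin n → ℝ) (h : ℝ → Fin m → ℝ)
    (he : Differentiable ℝ e) (hh : Differentiable ℝ h)
    (heq1 : ∀ t, Mε.mulVec (deriv e t) = Cᵀ.mulVec (h t))
    (heq2 : ∀ t, Mμ.mulVec (deriv h t) = -C.mulVec (e t)) :
    ∀ s t : ℝ,
      (Mε.mulVec (e s)) ⬝ᵥ (e s) + (Mμ.mulVec (h s)) ⬝ᵥ (h s) =
      (Mε.mulVec (e t)) ⬝ᵥ (e t) + (Mμ.mulVec (h t)) ⬝ᵥ (h t) := by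
  have hMεs : Mεᵀ = Mε := hMε.isHermitian
  have hMμs : Mμᵀ = Mμ := hMμ.isHermitian
  have hE : ∀ τ, HasDerivAt
      (fun τ => Mε.mulVec (e τ) ⬝ᵥ e τ + Mμ.mulVec (h τ) ⬝ᵥ h τ) 0 τ := by
    intro τ
    have h1 := quad_deriv Mε e (deriv e τ) τ ((he τ).hasDerivAt)
    have h2 := quad_deriv Mμ h (deriv h τ) τ ((hh τ).hasDerivAt)
    have := h1.add h2
    have hzero : (Mε.mulVec (deriv e τ) ⬝ᵥ e τ + Mε.mulVec (e τ) ⬝ᵥ deriv e τ) +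
        (Mμ.mulVec (deriv h τ) ⬝ᵥ h τ + Mμ.mulVec (h τ) ⬝ᵥ deriv h τ) = 0 := by
      have a1 : Mε.mulVec (e τ) ⬝ᵥ deriv e τ = Mε.mulVec (deriv e τ) ⬝ᵥ e τ := by
        rw [dot_swap, hMεs, dotProduct_comm]
      have a2 : Mμ.mulVec (h τ) ⬝ᵥ deriv h τ = Mμ.mulVec (deriv h τ) ⬝ᵥ h τ := by
        rw [dot_swap, hMμs, dotProduct_comm]
      have b1 : Mε.mulVec (deriv e τ) ⬝ᵥ e τ = C.mulVec (e τ) ⬝ᵥ h τ := by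
        rw [heq1, dot_swap, Matrix.transpose_transpose, dotProduct_comm]
      have b2 : Mμ.mulVec (deriv h τ) ⬝ᵥ h τ = -(C.mulVec (e τ) ⬝ᵥ h τ) := by
        rw [heq2, neg_dotProduct]
      rw [a1, a2, b1, b2]; ring
    rw [hzero] at this
    exact this
  have hc := is_const_of_deriv_eq_zero
    (f := fun τ => Mε.mulVec (e τ) ⬝ᵥ e τ + Mμ.mulVec (h τ) ⬝ᵥ h τ)
    (fun τ => ((hE τ).differentiableAt))
    (fun τ => (hE τ).deriv)
  exact fun s t => hc s t
end

section
/- Let M̃ ∈ ℝ^{2n×2n} and M_μ ∈ ℝ^{m×m} be symmetric positive definite, C ∈ ℝ^{m×n}, P ∈ ℝ^{n×2n} with P_{ij}=1/2 for j=i or j=i+n and 0 otherwise, and set C̃ := C·P and M⁻¹ := P·M̃⁻¹·Pᵀ. If ẽ : ℝ → ℝ^{2n} and h̃ : ℝ → ℝᵐ are differentiable and satisfy M̃ ẽ'(t) = C̃ᵀ h̃(t) and M_μ h̃'(t) = −C̃ ẽ(t) for all t, then e(t) := P ẽ(t) and h(t) := h̃(t) satisfy e'(t) = M⁻¹ Cᵀ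 h(t) and M_μ h'(t) = −C e(t) for all t. -/
open Matrix

/-- The averaging matrix P ∈ ℝ^{n×2n} with P_{ij} = 1/2 if j = i or j = i+n. -/
noncomputable def avgP (n : ℕ) : Matrix (Fin n) (Fin n ⊕ Fin n) ℝ :=
  fun i j => if j = Sum.inl i ∨ j = Sum.inr i then (1 : ℝ) / 2 else 0

theorem stmt4 (n m : ℕ)
    (Mt : Matrix (Fin n ⊕ Fin n) (Fin n ⊕ Fin n) ℝ)
    (Mμ : Matrix (Fin m) (Fin m) ℝ)
    (hMt : Mt.PosDef) (hMμ : Mμ.PosDef)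
    (C : Matrix (Fin m) (Fin n) ℝ)
    (et : ℝ → (Fin n ⊕ Fin n) → ℝ) (ht : ℝ → Fin m → ℝ)
    (het : Differentiable ℝ et) (hht : Differentiable ℝ ht)
    (heq1 : ∀ t, Mt.mulVec (deriv et t) = (C * avgP n)ᵀ.mulVec (ht t))
    (heq2 : ∀ t, Mμ.mulVec (deriv ht t) = -(C * avgP n).mulVec (et t)) :
    (∀ t, deriv (fun s => (avgP n).mulVec (et s)) t =
        (avgP n * Mt⁻¹ * (avgP n)ᵀ).mulVec (Cᵀ.mulVec (ht t))) ∧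
      (∀ t, Mμ.mulVec (deriv ht t) = -C.mulVec ((avgP n).mulVec (et t))) := by
  have hdet : IsUnit Mt.det := isUnit_iff_ne_zero.mpr (ne_of_gt hMt.det_pos)
  have hinv : ∀ v, Mt⁻¹.mulVec (Mt.mulVec v) = v := by
    intro v
    rw [Matrix.mulVec_mulVec, Matrix.nonsing_inv_mul _ hdet, Matrix.one_mulVec]
  have hder : ∀ t, deriv et t = Mt⁻¹.mulVec ((C * avgP n)ᵀ.mulVec (ht t)) := by
    intro t
    rw [← heq1 t, hinv]
  constructor
  · intro t
    have h1 : HasDerivAt (fun s => (avgP n).mulVec (et s))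
        ((avgP n).mulVec (deriv et t)) t := by
      exact ((Matrix.mulVecLin (avgP n)).toContinuousLinearMap.hasFDerivAt.comp t
        (het t).hasFDerivAt).hasDerivAt
    rw [h1.deriv, hder t, Matrix.transpose_mul]
    simp [Matrix.mulVec_mulVec, Matrix.mul_assoc]
  · intro t
    rw [heq2 t]
    simp [Matrix.mulVec_mulVec]
end
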